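/- arXiv:math/0603622 — 2 statements merged into one kernel-verified Lean document; each statement's English description precedes it below -/
import Mathlib

section
/- Let l be a prime and let f : H → H' be a morphism of ℤₗ-modules. Assume: (1) ker f is torsion-free; (2) H is a finitely generated ℤₗ-module; (3) there are natural numbers a, b, m with a + b < m such that the kernel of the induced map H/l^m H → H'/l^m H' is annihilated by l^a; and (4) the torsion submodule of H' is annihilated by l^b. Then f is injective. -/
/-!
If `f x = 0`, the hypothesis on the reduction mod `l^m` shows that `x` is divisible by
arbitrarily high powers of `l` up to torsion: from `l^e • x = l^(e+n) • z` we get that `f z` is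
torsion, hence killed by `l^b`, so `l^(a+b) • z` is divisible by `l^m`, and since `m > a + b`
this gains one power of `l`. The torsion of the finitely generated module `H` is killed by a
single power `l^t`, so `l^t • x` lies in every `l^n • H`, and vanishes by Krull's intersection
theorem. As `ker f` is torsion-free, `x = 0`.
-/

section

open Submodule

variable {R M : Type*} [CommRing R] [AddCommGroup M] [Module R M]

theorem exists_pow_smul_eq_pow_add_smul_of_map_eq_zero [NoZeroDivisors R] {N : Type*}
    [AddCommGroup N] [Module R N] (f : M →ₗ[R] N) {ϖ : R} (hϖ : ϖ ≠ 0) {a b m : ℕ}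
    (habm : a + b < m)
    (hmodker : ∀ x : M, (∃ y : N, f x = ϖ ^ m • y) → ∃ z : M, ϖ ^ a • x = ϖ ^ m • z)
    (htors : ∀ y : N, (∃ c : R, c ≠ 0 ∧ c • y = 0) → ϖ ^ b • y = 0)
    {x : M} (hx : f x = 0) (n : ℕ) : ∃ (e : ℕ) (z : M), ϖ ^ e • x = ϖ ^ (e + n) • z := by
  induction n with
  | zero => exact ⟨0, x, rfl⟩
  | succ n ih =>
    obtain ⟨e, z, hz⟩ := ih
    have hfz : ϖ ^ b • f z = 0 := htors _ ⟨_, pow_ne_zero (e + n) hϖ, by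
      rw [← map_smul, ← hz, map_smul, hx, smul_zero]⟩
    obtain ⟨w, hw⟩ := hmodker (ϖ ^ b • z) ⟨0, by rw [map_smul, hfz, smul_zero]⟩
    refine ⟨a + b + e, ϖ ^ (m - (a + b + 1)) • w, ?_⟩
    calc ϖ ^ (a + b + e) • x
        = ϖ ^ (a + b) • ϖ ^ e • x := by rw [smul_smul, ← pow_add]
      _ = ϖ ^ (e + n) • ϖ ^ a • ϖ ^ b • z := by
          rw [hz, smul_comm, smul_smul (ϖ ^ a), ← pow_add]
      _ = ϖ ^ (e + n) • ϖ ^ m • w := by rw [hw]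
      _ = _ := by
          rw [smul_smul, smul_smul, ← pow_add, ← pow_add]
          congr 2
          omega

variable [Module.Finite R M]

theorem eq_zero_of_forall_eq_pow_smul [IsNoetherianRing R] [IsLocalRing R] {ϖ : R}
    (hϖ : ¬IsUnit ϖ) {x : M} (h : ∀ n : ℕ, ∃ z : M, x = ϖ ^ n • z) : x = 0 := by
  have : IsHausdorff (Ideal.span {ϖ}) M :=
    .of_isLocalRing _ _ (by rwa [Ne, Ideal.span_singleton_eq_top])
  refine IsHausdorff.haus this x fun n => ?_
  obtain ⟨z, rfl⟩ := h n
  rw [SModEq.zero, Ideal.span_singleton_pow]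
  exact smul_mem_smul (Ideal.mem_span_singleton_self _) mem_top

variable [IsDomain R] [IsDiscreteValuationRing R] {ϖ : R}

theorem exists_pow_smul_torsion_eq_zero (hϖ : Irreducible ϖ) :
    ∃ t : ℕ, ∀ x ∈ torsion R M, ϖ ^ t • x = 0 := by
  have : Module.Finite R (torsion R M) := Module.IsNoetherian.finite R _
  obtain ⟨c, hc_ann, hc⟩ := annihilator_top_inter_nonZeroDivisors
    (torsion_isTorsion (R := R) (M := M))
  obtain ⟨t, u, hu⟩ := IsDiscreteValuationRing.associated_pow_irreducible
    (nonZeroDivisors.ne_zero hc) hϖ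
  refine ⟨t, fun x hx => ?_⟩
  have hcx : c • (⟨x, hx⟩ : torsion R M) = 0 := mem_annihilator.mp hc_ann _ mem_top
  rw [← hu, mul_comm, mul_smul]
  simpa using congrArg (fun y : torsion R M => (u : R) • (y : M)) hcx

theorem exists_pow_smul_eq_zero_of_forall_pow_smul_eq_pow_add_smul (hϖ : Irreducible ϖ)
    {x : M} (h : ∀ n : ℕ, ∃ (e : ℕ) (z : M), ϖ ^ e • x = ϖ ^ (e + n) • z) :
    ∃ t : ℕ, ϖ ^ t • x = 0 := by
  obtain ⟨t, ht⟩ := exists_pow_smul_torsion_eq_zero (M := M) hϖ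
  refine ⟨t, eq_zero_of_forall_eq_pow_smul hϖ.not_isUnit fun n => ?_⟩
  obtain ⟨e, z, hz⟩ := h n
  have htors : x - ϖ ^ n • z ∈ torsion R M :=
    ⟨⟨ϖ ^ e, pow_mem (mem_nonZeroDivisors_of_ne_zero hϖ.ne_zero) e⟩,
      by rw [Submonoid.smul_def, smul_sub, hz, pow_add, mul_smul, sub_self]⟩
  refine ⟨ϖ ^ t • z, ?_⟩
  rw [← sub_eq_zero, smul_comm, ← smul_sub]
  exact ht _ htors

end

/-- Sublemma (Section 3.3): a ℤₗ-linear map with torsion-free kernel, finitely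
generated source, kernel of the mod-l^m reduction annihilated by l^a, and
torsion of the target annihilated by l^b (with a + b < m) is injective. -/
theorem sublemma_injective (l : ℕ) [Fact l.Prime]
    (H H' : Type*) [AddCommGroup H] [Module ℤ_[l] H]
    [AddCommGroup H'] [Module ℤ_[l] H']
    (f : H →ₗ[ℤ_[l]] H')
    (hker_tf : ∀ (c : ℤ_[l]) (x : H), f x = 0 → c ≠ 0 → c • x = 0 → x = 0)
    [Module.Finite ℤ_[l] H]
    (a b m : ℕ) (habm : a + b < m)
    (hmodker : ∀ x : H, (∃ y : H', f x = ((l : ℤ_[l]) ^ m) • y) →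
      ∃ z : H, ((l : ℤ_[l]) ^ a) • x = ((l : ℤ_[l]) ^ m) • z)
    (htors : ∀ y : H', (∃ c : ℤ_[l], c ≠ 0 ∧ c • y = 0) → ((l : ℤ_[l]) ^ b) • y = 0) :
    Function.Injective f := by
  have hl : Irreducible (l : ℤ_[l]) := PadicInt.irreducible_p
  rw [injective_iff_map_eq_zero]
  intro x hx
  obtain ⟨t, ht⟩ := exists_pow_smul_eq_zero_of_forall_pow_smul_eq_pow_add_smul hl
    (exists_pow_smul_eq_pow_add_smul_of_map_eq_zero f hl.ne_zero habm hmodker htors hx)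
  exact hker_tf _ x hx (pow_ne_zero t hl.ne_zero) ht
end

section
/- Let l be a prime. Suppose 0 → K → H → H' → 0 is a short exact sequence of ℤₗ-modules such that K is a finitely generated torsion-free ℤₗ-module, and there exist natural numbers a, b, m with a + b < m such that the l^m-torsion subgroup H'[l^m] is annihilated by l^b and the kernel of the induced map H/l^m H → H'/l^m H' is annihilated by l^a. Then K = 0. -/
/-- Key reduction in the proof of the Sublemma (Section 3.3): in a short exact
sequence `0 → K → H → H' → 0` of ℤₗ-modules with `K` finitely generated and
torsion-free, if `H'[l^m]` is annihilated by `l^b` and the kernel of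
`H/l^m H → H'/l^m H'` is annihilated by `l^a` with `a + b < m`, then `K = 0`. -/
theorem kernel_vanishes (l : ℕ) [Fact l.Prime]
    (K H H' : Type*) [AddCommGroup K] [Module ℤ_[l] K]
    [AddCommGroup H] [Module ℤ_[l] H] [AddCommGroup H'] [Module ℤ_[l] H']
    (i : K →ₗ[ℤ_[l]] H) (p : H →ₗ[ℤ_[l]] H')
    (hi : Function.Injective i) (hp : Function.Surjective p)
    (hexact : ∀ h : H, p h = 0 ↔ ∃ k : K, i k = h)
    [Module.Finite ℤ_[l] K]
    (hKtf : ∀ (c : ℤ_[l]) (k : K), c ≠ 0 → c • k = 0 → k = 0)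
    (a b m : ℕ) (habm : a + b < m)
    (htors : ∀ y : H', ((l : ℤ_[l]) ^ m) • y = 0 → ((l : ℤ_[l]) ^ b) • y = 0)
    (hmodker : ∀ x : H, (∃ y : H', p x = ((l : ℤ_[l]) ^ m) • y) →
      ∃ z : H, ((l : ℤ_[l]) ^ a) • x = ((l : ℤ_[l]) ^ m) • z) :
    ∀ k : K, k = 0 := by
  have hlne : (l : ℤ_[l]) ≠ 0 := by
    exact_mod_cast Nat.cast_ne_zero.mpr (Fact.out : l.Prime).ne_zero
  -- Step 1: every k is divisible by l.
  have key : ∀ k : K, ∃ k'' : K, k = (l : ℤ_[l]) • k'' := by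
    intro k
    obtain ⟨z, hz⟩ := hmodker (i k) ⟨0, by
      simp [(hexact (i k)).mpr ⟨k, rfl⟩]⟩
    have hpz : p (((l : ℤ_[l]) ^ m) • z) = 0 := by
      have hpik : p (i k) = 0 := (hexact (i k)).mpr ⟨k, rfl⟩
      rw [← hz, map_smul, hpik, smul_zero]
    have hpzm : ((l : ℤ_[l]) ^ m) • p z = 0 := by rwa [← map_smul]
    have hb := htors (p z) hpzm
    obtain ⟨k', hk'⟩ := (hexact (((l : ℤ_[l]) ^ b) • z)).mp (by rwa [map_smul])
    -- i ((l^(a+b)) • k) = l^m • l^b • z = l^(m) • (i k') ... careful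
    have heq : i (((l : ℤ_[l]) ^ a) • k) = i (((l : ℤ_[l]) ^ (m - b)) • k') := by
      rw [map_smul, map_smul, hk', ← mul_smul, ← pow_add, hz]
      congr 2
      omega
    have hkk : ((l : ℤ_[l]) ^ a) • k = ((l : ℤ_[l]) ^ (m - b)) • k' := hi heq
    set s := m - b - a with hsdef
    have hs1 : 1 ≤ s := by omega
    have : ((l : ℤ_[l]) ^ a) • (k - ((l : ℤ_[l]) ^ s) • k') = 0 := by
      rw [smul_sub, hkk, ← mul_smul, ← pow_add, sub_eq_zero]
      congr 2
      omega
    have hk0 := hKtf _ _ (pow_ne_zero _ hlne) this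
    refine ⟨((l : ℤ_[l]) ^ (s - 1)) • k', ?_⟩
    rw [sub_eq_zero] at hk0
    rw [hk0, ← mul_smul, ← pow_succ']
    congr 2
    omega
  -- Step 2: Nakayama.
  have htop : (⊤ : Submodule ℤ_[l] K) ≤ (Ideal.span {(l : ℤ_[l])}) • ⊤ := by
    intro k _
    obtain ⟨k'', hk''⟩ := key k
    rw [hk'']
    exact Submodule.smul_mem_smul (Ideal.subset_span rfl) trivial
  have hbot : (⊤ : Submodule ℤ_[l] K) = ⊥ := by
    refine Submodule.eq_bot_of_le_smul_of_le_jacobson_bot _ _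
      (Module.Finite.fg_top (R := ℤ_[l]) (M := K)) htop ?_
    rw [← PadicInt.maximalIdeal_eq_span_p]
    exact (IsLocalRing.jacobson_eq_maximalIdeal ⊥ bot_ne_top).ge
  intro k
  have hk : k ∈ (⊥ : Submodule ℤ_[l] K) := hbot ▸ Submodule.mem_top
  simpa using hk
end
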